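/- Let 1 < d₁ ≤ κ and d_N > 1 with d₁ ≥ … ≥ d_N, and h_i(u) as above. Then G₂(u) = max_i h_i(u) attains the value 0 at u* = d₁/κ, i.e., G₂(d₁/κ) = 0 and d₁/κ minimizes G₂ over [1/κ, ∞). -/
import Mathlib


/-- Spectral-norm reduced problem, case `1 < d₁ ≤ κ` and `d_N > 1`: the value
`u* = d₁/κ` gives `G₂(u*) = 0` and minimizes `G₂` over `[1/κ, ∞)`. -/
theorem G2_min_zero_error (N : ℕ) (hN : 0 < N) (d : ℕ → ℝ) (κ : ℝ)
    (hdec : ∀ i j, i ≤ j → j < N → d j ≤ d i)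
    (hd1 : 1 < d 0) (hd1κ : d 0 ≤ κ) (hdN : 1 < d (N - 1))
    (G : ℝ → ℝ)
    (hG : ∀ u, G u = (Finset.range N).sup'
      (Finset.nonempty_range_iff.mpr hN.ne')
      (fun i => |min (κ * u) (max (d i) (max 1 u)) - d i|)) :
    G (d 0 / κ) = 0 ∧ ∀ u ∈ Set.Ici (1 / κ), G (d 0 / κ) ≤ G u := by
  have hκ : 0 < κ := lt_of_lt_of_le (lt_trans one_pos hd1) hd1κ
  have hzero : G (d 0 / κ) = 0 := by
    rw [hG]
    apply le_antisymm
    · apply Finset.sup'_le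
      intro i hi
      rw [Finset.mem_range] at hi
      have hdi1 : 1 < d i := lt_of_lt_of_le hdN
        (hdec i (N - 1) (Nat.le_sub_one_of_lt hi) (Nat.sub_lt hN one_pos))
      have hdid0 : d i ≤ d 0 := hdec 0 i (Nat.zero_le i) hi
      have hu1 : d 0 / κ ≤ 1 := (div_le_one hκ).mpr hd1κ
      have h1 : max 1 (d 0 / κ) = 1 := max_eq_left hu1
      have h2 : κ * (d 0 / κ) = d 0 := mul_div_cancel₀ _ (ne_of_gt hκ)
      rw [h1, h2, max_eq_left hdi1.le, min_eq_right hdid0, sub_self, abs_zero]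
    · exact le_trans (abs_nonneg _) (Finset.le_sup'_of_le _ (Finset.mem_range.mpr hN) le_rfl)
  refine ⟨hzero, fun u _ => ?_⟩
  rw [hzero, hG]
  exact le_trans (abs_nonneg _) (Finset.le_sup'_of_le _ (Finset.mem_range.mpr hN) le_rfl)
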